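/- Let A ∈ ℝ^{n×n}, B ∈ ℝ^{n×m}, B₁ ∈ ℝ^{n×p}, with (A,B) a controllable pair and the column space of B contained in the column space of B₁. Let Σ be a symmetric positive definite n×n matrix and suppose X ∈ ℝ^{n×m} satisfies AΣ + ΣAᵀ + B₁B₁ᵀ + BXᵀ + XBᵀ = 0. Then, setting K := −XᵀΣ⁻¹, the matrix A − BK is Hurwitz and (A − BK)Σ + Σ(A − BK)ᵀ + B₁B₁ᵀ = 0. -/

import Mathlib

open Matrix ComplexOrder

/-- The controllability matrix `[B, AB, A²B, …, A^{n−1}B]` (columns indexed by `Fin n × Fin m`). -/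
def ctrbMatrix {n m : ℕ} (A : Matrix (Fin n) (Fin n) ℝ) (B : Matrix (Fin n) (Fin m) ℝ) :
    Matrix (Fin n) (Fin n × Fin m) ℝ :=
  Matrix.of fun i p => ((A ^ (p.1 : ℕ)) * B) i p.2

/-- `(A,B)` is a controllable pair iff the controllability matrix has rank `n`. -/
def IsControllablePair {n m : ℕ} (A : Matrix (Fin n) (Fin n) ℝ)
    (B : Matrix (Fin n) (Fin m) ℝ) : Prop :=
  (ctrbMatrix A B).rank = n

/-- A real square matrix is Hurwitz iff all its (complex) eigenvalues have negative real part. -/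
def IsHurwitz {n : ℕ} (F : Matrix (Fin n) (Fin n) ℝ) : Prop :=
  ∀ μ ∈ spectrum ℂ (F.map (algebraMap ℝ ℂ)), μ.re < 0

noncomputable def cplx {a b : Type*} (M : Matrix a b ℝ) : Matrix a b ℂ :=
  M.map (algebraMap ℝ ℂ)

lemma cplx_mul {a b c : Type*} [Fintype b] (M : Matrix a b ℝ) (N : Matrix b c ℝ) :
    cplx (M * N) = cplx M * cplx N := Matrix.map_mul

lemma cplx_transpose {a b : Type*} (M : Matrix a b ℝ) :
    cplx Mᵀ = (cplx M)ᵀ := Matrix.transpose_map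

lemma cplx_add {a b : Type*} (M N : Matrix a b ℝ) :
    cplx (M + N) = cplx M + cplx N := Matrix.map_add _ (map_add _) _ _

lemma cplx_pow {a : Type*} [Fintype a] [DecidableEq a] (M : Matrix a a ℝ) (k : ℕ) :
    cplx (M ^ k) = cplx M ^ k := by
  simpa [RingHom.mapMatrix_apply, cplx] using map_pow (RingHom.mapMatrix (algebraMap ℝ ℂ)) M k

lemma cplx_mulVec_star {a b : Type*} [Fintype b] (M : Matrix a b ℝ) (v : b → ℂ) :
    cplx M *ᵥ star v = star (cplx M *ᵥ v) := by
  funext i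
  simp [cplx, mulVec, dotProduct, map_sum, mul_comm]

lemma cplx_quad_re {a : Type*} [Fintype a] (S : Matrix a a ℝ) (v : a → ℂ) :
    (star v ⬝ᵥ cplx S *ᵥ v).re
      = (fun i => (v i).re) ⬝ᵥ S *ᵥ (fun i => (v i).re)
        + (fun i => (v i).im) ⬝ᵥ S *ᵥ (fun i => (v i).im) := by
  simp only [cplx, dotProduct, mulVec, Complex.re_sum, Finset.mul_sum, Finset.sum_mul,
    Pi.star_apply, map_apply, Complex.mul_re, Complex.mul_im, Complex.ofReal_re,
    Complex.ofReal_im, RingHom.coe_coe, Complex.coe_algebraMap, RCLike.star_def,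
    Complex.conj_re, Complex.conj_im]
  rw [← Finset.sum_add_distrib]
  refine Finset.sum_congr rfl fun i _ => ?_
  rw [← Finset.sum_add_distrib]
  refine Finset.sum_congr rfl fun j _ => ?_
  ring

lemma cplx_quad_pos {a : Type*} [Fintype a] [DecidableEq a] {S : Matrix a a ℝ} (hS : S.PosDef)
    {v : a → ℂ} (hv : v ≠ 0) : 0 < (star v ⬝ᵥ cplx S *ᵥ v).re := by
  rw [cplx_quad_re]
  by_cases hx : (fun i => (v i).re) = 0
  · have hy : (fun i => (v i).im) ≠ 0 := by
      intro hy; apply hv; funext i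
      exact Complex.ext (congrFun hx i) (congrFun hy i)
    have := hS.dotProduct_mulVec_pos hy
    have h2 := hS.posSemidef.dotProduct_mulVec_nonneg (fun i => (v i).re)
    simp only [RCLike.re_to_real, star_trivial] at this h2 ⊢
    linarith
  · have := hS.dotProduct_mulVec_pos hx
    have h2 := hS.posSemidef.dotProduct_mulVec_nonneg (fun i => (v i).im)
    simp only [RCLike.re_to_real, star_trivial] at this h2 ⊢
    linarith

lemma eig_exists {a : ℕ} {M : Matrix (Fin a) (Fin a) ℂ} {μ : ℂ}
    (h : μ ∈ spectrum ℂ M) : ∃ v : Fin a → ℂ, v ≠ 0 ∧ Mᵀ *ᵥ v = μ • v := by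
  rw [spectrum.mem_iff, Matrix.isUnit_iff_isUnit_det, isUnit_iff_ne_zero, not_not] at h
  have hdet : ((μ • (1 : Matrix (Fin a) (Fin a) ℂ) - M)ᵀ).det = 0 := by
    rw [det_transpose]
    simpa [Algebra.algebraMap_eq_smul_one] using h
  obtain ⟨v, hMv, hv⟩ := (Matrix.exists_mulVec_eq_zero_iff).2 hdet
  refine ⟨v, hMv, ?_⟩
  rw [transpose_sub, transpose_smul, transpose_one, sub_mulVec, smul_mulVec,
    one_mulVec, sub_eq_zero] at hv
  exact hv.symm

lemma isUnit_of_rank_eq {a : ℕ} {G : Matrix (Fin a) (Fin a) ℝ} (h : G.rank = a) : IsUnit G := by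
  rw [← Matrix.mulVec_surjective_iff_isUnit]
  have htop : LinearMap.range G.mulVecLin = ⊤ := by
    apply Submodule.eq_top_of_finrank_eq
    rw [← Matrix.rank, h]
    simp
  exact LinearMap.range_eq_top.1 htop

theorem stmt8 {n m p : ℕ} (A : Matrix (Fin n) (Fin n) ℝ) (B : Matrix (Fin n) (Fin m) ℝ)
    (B₁ : Matrix (Fin n) (Fin p) ℝ)
    (hAB : IsControllablePair A B)
    (hBB₁ : Set.range B.mulVec ⊆ Set.range B₁.mulVec)
    (S : Matrix (Fin n) (Fin n) ℝ) (hS : S.PosDef)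
    (X : Matrix (Fin n) (Fin m) ℝ)
    (hX : A * S + S * Aᵀ + B₁ * B₁ᵀ + B * Xᵀ + X * Bᵀ = 0) :
    IsHurwitz (A - B * (-Xᵀ * S⁻¹)) ∧
    (A - B * (-Xᵀ * S⁻¹)) * S + S * (A - B * (-Xᵀ * S⁻¹))ᵀ + B₁ * B₁ᵀ = 0 := by
  have hSdet : IsUnit S.det := isUnit_iff_ne_zero.2 hS.det_pos.ne'
  set F : Matrix (Fin n) (Fin n) ℝ := A + B * (Xᵀ * S⁻¹) with hFdef
  have hF : A - B * (-Xᵀ * S⁻¹) = F := by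
    rw [hFdef, Matrix.neg_mul, Matrix.mul_neg, sub_neg_eq_add]
  have hSsym : Sᵀ = S := by
    have := hS.isHermitian; simpa [Matrix.IsHermitian] using this
  have hFS : F * S = A * S + B * Xᵀ := by
    rw [hFdef, Matrix.add_mul, Matrix.mul_assoc B, Matrix.mul_assoc Xᵀ,
      Matrix.nonsing_inv_mul S hSdet, Matrix.mul_one]
  have hFT : Fᵀ = Aᵀ + S⁻¹ * X * Bᵀ := by
    rw [hFdef, transpose_add, transpose_mul, transpose_mul, transpose_transpose,
      Matrix.transpose_nonsing_inv, hSsym, Matrix.mul_assoc]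
  have hSFT : S * Fᵀ = S * Aᵀ + X * Bᵀ := by
    rw [hFT, Matrix.mul_add, ← Matrix.mul_assoc, ← Matrix.mul_assoc,
      Matrix.mul_nonsing_inv S hSdet, Matrix.one_mul]
  have hL : F * S + S * Fᵀ + B₁ * B₁ᵀ = 0 := by
    rw [hFS, hSFT, show A * S + B * Xᵀ + (S * Aᵀ + X * Bᵀ) + B₁ * B₁ᵀ
      = A * S + S * Aᵀ + B₁ * B₁ᵀ + B * Xᵀ + X * Bᵀ from by abel, hX]
  refine ⟨?_, by rw [hF]; exact hL⟩
  intro μ hμ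
  rw [hF] at hμ
  obtain ⟨v, hv, hev⟩ := eig_exists (M := cplx F) hμ
  set s : ℂ := star v ⬝ᵥ cplx S *ᵥ v with hsdef
  set w : (Fin p) → ℂ := (cplx B₁)ᵀ *ᵥ v with hwdef
  -- complexified Lyapunov equation
  have hLc : cplx F * cplx S + cplx S * (cplx F)ᵀ + cplx B₁ * (cplx B₁)ᵀ = 0 := by
    have h := congrArg cplx hL
    rw [cplx_add, cplx_add, cplx_mul, cplx_mul, cplx_mul, cplx_transpose, cplx_transpose] at h
    simpa [cplx] using h
  -- star-conjugation of eigen-equation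
  have hstar : (star v) ᵥ* cplx F = (starRingEnd ℂ μ) • star v := by
    rw [← mulVec_transpose, ← cplx_transpose, cplx_mulVec_star, cplx_transpose, hev, star_smul]
    rfl
  have key : (starRingEnd ℂ μ) * s + μ * s + star w ⬝ᵥ w = 0 := by
    have h0 : star v ⬝ᵥ ((cplx F * cplx S + cplx S * (cplx F)ᵀ + cplx B₁ * (cplx B₁)ᵀ) *ᵥ v) = 0 := by
      rw [hLc]; simp
    rw [add_mulVec, add_mulVec, dotProduct_add, dotProduct_add] at h0
    have h1 : star v ⬝ᵥ (cplx F * cplx S) *ᵥ v = (starRingEnd ℂ μ) * s := by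
      rw [← mulVec_mulVec, dotProduct_mulVec, hstar, smul_dotProduct, hsdef]
      rfl
    have h2 : star v ⬝ᵥ (cplx S * (cplx F)ᵀ) *ᵥ v = μ * s := by
      rw [← mulVec_mulVec, hev, mulVec_smul, dotProduct_smul, hsdef]
      rfl
    have h3 : star v ⬝ᵥ (cplx B₁ * (cplx B₁)ᵀ) *ᵥ v = star w ⬝ᵥ w := by
      rw [← mulVec_mulVec, dotProduct_mulVec, ← mulVec_transpose, ← cplx_transpose,
        cplx_mulVec_star, cplx_transpose, ← hwdef]
    rw [h1, h2, h3] at h0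
    exact h0
  have hsre : 0 < s.re := cplx_quad_pos hS hv
  have htnn : (0:ℂ) ≤ star w ⬝ᵥ w := dotProduct_star_self_nonneg w
  have htre : 0 ≤ (star w ⬝ᵥ w).re := by
    have := Complex.le_def.1 htnn; simpa using this.1
  have htim : (star w ⬝ᵥ w).im = 0 := by
    have := Complex.le_def.1 htnn; simpa using this.2.symm
  -- real part of key equation
  have keyre : 2 * μ.re * s.re + (star w ⬝ᵥ w).re = 0 := by
    have h2 : (starRingEnd ℂ μ) * s + μ * s = ((2 * μ.re : ℝ) : ℂ) * s := by
      rw [← add_mul, add_comm]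
      rw [Complex.add_conj]
    rw [h2] at key
    have := congrArg Complex.re key
    simpa [Complex.ofReal_mul] using this
  by_contra hre
  push_neg at hre
  have hμre : μ.re = 0 := by nlinarith
  have hw0 : w = 0 := by
    have hre0 : (star w ⬝ᵥ w).re = 0 := by nlinarith
    have : star w ⬝ᵥ w = 0 := Complex.ext (by simpa using hre0) (by simpa using htim)
    exact dotProduct_star_self_eq_zero.1 this
  -- Bᵀ v = 0
  have hBv : (cplx B)ᵀ *ᵥ v = 0 := by
    funext j
    obtain ⟨c, hc⟩ := hBB₁ ⟨Pi.single j 1, rfl⟩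
    have hcol : ∀ i, B i j = (B₁ *ᵥ c) i := by
      intro i
      rw [hc]
      simp [mulVec_single]
    have hwj : ∀ k, (∑ i, ((B₁ i k : ℂ)) * v i) = 0 := by
      intro k
      have := congrFun hw0 k
      simpa [hwdef, cplx, mulVec, dotProduct] using this
    calc ((cplx B)ᵀ *ᵥ v) j = ∑ i, (B i j : ℂ) * v i := by
          simp [cplx, mulVec, dotProduct]
      _ = ∑ i, ∑ k, (B₁ i k : ℂ) * (c k : ℂ) * v i := by
          refine Finset.sum_congr rfl fun i _ => ?_
          rw [hcol i]
          simp [mulVec, dotProduct, Finset.sum_mul]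
      _ = ∑ k, (c k : ℂ) * ∑ i, (B₁ i k : ℂ) * v i := by
          rw [Finset.sum_comm]
          refine Finset.sum_congr rfl fun k _ => ?_
          rw [Finset.mul_sum]
          exact Finset.sum_congr rfl fun i _ => by ring
      _ = 0 := by simp [hwj]
  -- A eigen-equation
  have hAv : (cplx A)ᵀ *ᵥ v = μ • v := by
    have h1 : (cplx F)ᵀ = (cplx A)ᵀ + cplx (S⁻¹ * X) * (cplx B)ᵀ := by
      rw [← cplx_transpose, hFT, cplx_add, cplx_mul, cplx_mul, cplx_transpose, cplx_transpose]
    rw [h1, add_mulVec, ← mulVec_mulVec, hBv, mulVec_zero, add_zero] at hev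
    exact hev
  have hAk : ∀ k : ℕ, ((cplx A)ᵀ) ^ k *ᵥ v = (μ ^ k) • v := by
    intro k
    induction k with
    | zero => simp
    | succ k ih =>
      rw [pow_succ, ← mulVec_mulVec, hAv, mulVec_smul, ih, smul_smul, ← pow_succ']
  -- controllability matrix kills v
  have hMv : (cplx (ctrbMatrix A B))ᵀ *ᵥ v = 0 := by
    funext q
    obtain ⟨k, j⟩ := q
    have hkB : (cplx (A ^ (k:ℕ) * B))ᵀ *ᵥ v = 0 := by
      rw [cplx_mul, transpose_mul, ← mulVec_mulVec, cplx_pow, transpose_pow, hAk,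
        mulVec_smul, hBv, smul_zero]
    have := congrFun hkB j
    simpa [cplx, ctrbMatrix, mulVec, dotProduct] using this
  -- contradiction with controllability
  have hG : IsUnit (ctrbMatrix A B * (ctrbMatrix A B)ᵀ) := by
    apply isUnit_of_rank_eq
    rw [Matrix.rank_self_mul_transpose]
    exact hAB
  have hGc : IsUnit (cplx (ctrbMatrix A B * (ctrbMatrix A B)ᵀ)) := by
    rw [Matrix.isUnit_iff_isUnit_det, isUnit_iff_ne_zero]
    rw [Matrix.isUnit_iff_isUnit_det, isUnit_iff_ne_zero] at hG
    have : (cplx (ctrbMatrix A B * (ctrbMatrix A B)ᵀ)).det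
        = ((ctrbMatrix A B * (ctrbMatrix A B)ᵀ).det : ℂ) := by
      simpa [cplx, RingHom.mapMatrix_apply] using
        (RingHom.map_det (algebraMap ℝ ℂ) (ctrbMatrix A B * (ctrbMatrix A B)ᵀ)).symm
    rw [this]
    exact_mod_cast hG
  have hinj := Matrix.mulVec_injective_iff_isUnit.2 hGc
  apply hv
  apply hinj
  rw [cplx_mul, ← mulVec_mulVec, cplx_transpose, hMv, mulVec_zero, mulVec_zero]
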